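/- Suppose τ₀, τ₁, τ₂ ∈ H satisfy ⟨τ₀,τ₀⟩ = ⟨τ₁,τ₁⟩ = ⟨τ₂,τ₂⟩ = 1/3, τ₂ = ω τ₁, ⟨τ₀, τ₁⟩ = −ω/6, and ⟨τ₀, τ₂⟩ = −ω²/6. Then ⟨Φ₀₀, Φ₁₁⟩ = 2/3; in particular Φ₀₀ and Φ₁₁ are not orthogonal. -/

import Mathlib

open scoped BigOperators ComplexConjugate

variable {H : Type*} [NormedAddCommGroup H] [InnerProductSpace ℂ H]

/-- The primitive cube root of unity `ω = e^{2πi/3}`. -/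
noncomputable def ω : ℂ := Complex.exp (2 * Real.pi * Complex.I / 3)

/-- `|v_j⟩ = (1/√3)(i|0⟩ + ω^{-j}|1⟩ + ω^{-2j}|2⟩)` in `ℂ³`. -/
noncomputable def v (j : Fin 3) : Fin 3 → ℂ := fun k =>
  ((Real.sqrt 3 : ℂ))⁻¹ * (if k = 0 then Complex.I else ω ^ (-((j : ℕ) * (k : ℕ) : ℤ)))

/-- `|v_j'⟩ = (1/√3)(|0⟩ + ω^{-j}|1⟩ + i ω^{-2j}|2⟩)` in `ℂ³`. -/
noncomputable def v' (j : Fin 3) : Fin 3 → ℂ := fun k =>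
  ((Real.sqrt 3 : ℂ))⁻¹ * (if k = 2 then Complex.I else 1) * ω ^ (-((j : ℕ) * (k : ℕ) : ℤ))

/-- The inner product on `ℂ³ ⊗ H`, viewed as triples of elements of `H`:
`⟨x, y⟩ = ∑ₖ ⟨xₖ, yₖ⟩` (conjugate-linear in the first argument). -/
noncomputable def ip (x y : Fin 3 → H) : ℂ := ∑ k, (inner ℂ (x k) (y k) : ℂ)

/-- `Φ₀₀ = √2 [ |v₀⟩⊗τ₀ − ½|v₁⟩⊗τ₁ − ½|v₂⟩⊗τ₂ ]` in `ℂ³ ⊗ H`. -/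
noncomputable def Phi00 (τ₀ τ₁ τ₂ : H) : Fin 3 → H := fun k =>
  (Real.sqrt 2 : ℂ) • (v 0 k • τ₀ - ((1/2 : ℂ) * v 1 k) • τ₁ - ((1/2 : ℂ) * v 2 k) • τ₂)

/-- `Φ₀₁ = √2 [ −(√3/2)|v₁'⟩⊗τ₁ + (√3/2)|v₂'⟩⊗τ₂ ]` in `ℂ³ ⊗ H`. -/
noncomputable def Phi01 (τ₁ τ₂ : H) : Fin 3 → H := fun k =>
  (Real.sqrt 2 : ℂ) • ((-((Real.sqrt 3 : ℂ) / 2) * v' 1 k) • τ₁ +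
    (((Real.sqrt 3 : ℂ) / 2) * v' 2 k) • τ₂)

/-- `Φ₁₀ = √2 [ (√3/2)|v₁⟩⊗τ₁ − (√3/2)|v₂⟩⊗τ₂ ]` in `ℂ³ ⊗ H`. -/
noncomputable def Phi10 (τ₁ τ₂ : H) : Fin 3 → H := fun k =>
  (Real.sqrt 2 : ℂ) • ((((Real.sqrt 3 : ℂ) / 2) * v 1 k) • τ₁ -
    (((Real.sqrt 3 : ℂ) / 2) * v 2 k) • τ₂)

/-- `Φ₁₁ = √2 [ |v₀'⟩⊗τ₀ − ½|v₁'⟩⊗τ₁ − ½|v₂'⟩⊗τ₂ ]` in `ℂ³ ⊗ H`. -/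
noncomputable def Phi11 (τ₀ τ₁ τ₂ : H) : Fin 3 → H := fun k =>
  (Real.sqrt 2 : ℂ) • (v' 0 k • τ₀ - ((1/2 : ℂ) * v' 1 k) • τ₁ - ((1/2 : ℂ) * v' 2 k) • τ₂)



lemma omega_pow_three : ω ^ 3 = 1 := by
  rw [ω, ← Complex.exp_nat_mul]
  rw [show ((3:ℕ):ℂ) * (2 * Real.pi * Complex.I / 3) = 2 * Real.pi * Complex.I by push_cast; ring]
  exact Complex.exp_two_pi_mul_I

lemma omega_ne_one : ω ≠ 1 := by
  rw [ω]
  simp only [Ne, Complex.exp_eq_one_iff]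
  push_neg
  intro n h
  have h2 : (Real.pi : ℂ) ≠ 0 := by exact_mod_cast Real.pi_ne_zero
  have hI := Complex.I_ne_zero
  have h3 : ((3 * n : ℤ) : ℂ) = 1 := by
    have key : ((3 * n : ℤ) : ℂ) * (2 * Real.pi * Complex.I) = 1 * (2 * Real.pi * Complex.I) := by
      push_cast
      linear_combination -3 * h
    exact mul_right_cancel₀ (by simp [h2, hI]) key
  have : (3 * n : ℤ) = 1 := by exact_mod_cast h3
  omega

lemma omega_sq_add : ω ^ 2 + ω + 1 = 0 := by
  have h := omega_pow_three
  have h1 : (ω - 1) * (ω ^ 2 + ω + 1) = 0 := by linear_combination h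
  rcases mul_eq_zero.mp h1 with h2 | h2
  · exact absurd (sub_eq_zero.mp h2) omega_ne_one
  · exact h2

lemma omega_ne_zero : ω ≠ 0 := by
  intro h
  have := omega_pow_three
  rw [h] at this; norm_num at this

lemma conj_omega : (starRingEnd ℂ) ω = ω ^ 2 := by
  have h1 : (starRingEnd ℂ) (2 * (Real.pi:ℂ) * Complex.I / 3) = -(2 * Real.pi * Complex.I / 3) := by
    simp [map_div₀, map_mul, map_ofNat, Complex.conj_I, Complex.conj_ofReal]
    ring
  rw [ω, ← Complex.exp_conj, h1, ← Complex.exp_nat_mul,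
    show ((2:ℕ):ℂ) * (2 * Real.pi * Complex.I / 3) = -(2 * Real.pi * Complex.I / 3) + 2 * Real.pi * Complex.I by push_cast; ring,
    Complex.exp_add, Complex.exp_two_pi_mul_I, mul_one]

lemma omega_inv : ω⁻¹ = ω ^ 2 :=
  inv_eq_of_mul_eq_one_left (by linear_combination omega_pow_three)

lemma omega_sq_inv : (ω ^ 2)⁻¹ = ω :=
  inv_eq_of_mul_eq_one_left (by linear_combination omega_pow_three)

lemma omega_pow4_inv : (ω ^ 4)⁻¹ = ω ^ 2 :=
  inv_eq_of_mul_eq_one_left (by linear_combination (ω^3 + 1) * omega_pow_three)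

lemma omega_zpow_two_inv : (ω ^ (2:ℤ))⁻¹ = ω := by
  rw [show (2:ℤ) = ((2:ℕ):ℤ) from rfl, zpow_natCast]; exact omega_sq_inv

lemma omega_zpow_four_inv : (ω ^ (4:ℤ))⁻¹ = ω ^ 2 := by
  rw [show (4:ℤ) = ((4:ℕ):ℤ) from rfl, zpow_natCast]; exact omega_pow4_inv

lemma omega_zpow_neg_one : ω ^ (-(1:ℤ)) = ω ^ 2 := by
  rw [zpow_neg, zpow_one]
  exact inv_eq_of_mul_eq_one_left (by linear_combination omega_pow_three)

lemma omega_zpow_neg_two : ω ^ (-(2:ℤ)) = ω := by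
  rw [show (-(2:ℤ)) = (-1) + (-1) by norm_num, zpow_add₀ omega_ne_zero, omega_zpow_neg_one]
  linear_combination ω * omega_pow_three

lemma omega_zpow_neg_four : ω ^ (-(4:ℤ)) = ω ^ 2 := by
  rw [show (-(4:ℤ)) = (-2) + (-2) by norm_num, zpow_add₀ omega_ne_zero, omega_zpow_neg_two]
  ring

set_option maxHeartbeats 2000000 in
/-- If `⟨τ₀,τ₀⟩ = ⟨τ₁,τ₁⟩ = ⟨τ₂,τ₂⟩ = 1/3`, `τ₂ = ω τ₁`,
`⟨τ₀,τ₁⟩ = -ω/6` and `⟨τ₀,τ₂⟩ = -ω²/6`, then `⟨Φ₀₀,Φ₁₁⟩ = 2/3 ≠ 0`; in particular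
`Φ₀₀` and `Φ₁₁` are not orthogonal. -/
theorem Phi00_Phi11_not_orthogonal {H : Type*} [NormedAddCommGroup H] [InnerProductSpace ℂ H]
    (τ₀ τ₁ τ₂ : H)
    (h0 : (inner ℂ τ₀ τ₀ : ℂ) = 1/3) (h1 : (inner ℂ τ₁ τ₁ : ℂ) = 1/3)
    (h2 : (inner ℂ τ₂ τ₂ : ℂ) = 1/3) (h12 : τ₂ = ω • τ₁)
    (h01 : (inner ℂ τ₀ τ₁ : ℂ) = -ω / 6) (h02 : (inner ℂ τ₀ τ₂ : ℂ) = -ω ^ 2 / 6) :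
    ip (Phi00 τ₀ τ₁ τ₂) (Phi11 τ₀ τ₁ τ₂) = 2/3 ∧
    ip (Phi00 τ₀ τ₁ τ₂) (Phi11 τ₀ τ₁ τ₂) ≠ 0 := by
  have h10 : (inner ℂ τ₁ τ₀ : ℂ) = -ω^2/6 := by
    rw [← inner_conj_symm, h01]
    simp only [map_div₀, map_neg, conj_omega, map_ofNat]
  have h20 : (inner ℂ τ₂ τ₀ : ℂ) = -ω/6 := by
    rw [← inner_conj_symm, h02]
    simp only [map_div₀, map_neg, map_pow, conj_omega, map_ofNat]
    rw [show ((ω^2)^2 : ℂ) = ω * ω^3 by ring, omega_pow_three, mul_one]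
  have h12' : (inner ℂ τ₁ τ₂ : ℂ) = ω/3 := by rw [h12, inner_smul_right, h1]; ring
  have h21 : (inner ℂ τ₂ τ₁ : ℂ) = ω^2/3 := by rw [h12, inner_smul_left, conj_omega, h1]; ring
  have key : ip (Phi00 τ₀ τ₁ τ₂) (Phi11 τ₀ τ₁ τ₂) = 2/3 := by
    simp only [ip, Phi00, Phi11, v, v', Fin.sum_univ_three, Fin.isValue, Fin.val_zero,
      Fin.val_one, show ((2:Fin 3):ℕ) = 2 from rfl, if_true, if_false,
      show ((0:Fin 3) = (0:Fin 3)) = True by simp, show ((1:Fin 3) = (0:Fin 3)) = False by simp,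
      show ((2:Fin 3) = (0:Fin 3)) = False by simp, show ((0:Fin 3) = (2:Fin 3)) = False by simp,
      show ((1:Fin 3) = (2:Fin 3)) = False by simp, show ((2:Fin 3) = (2:Fin 3)) = True by simp,
      ite_true, ite_false]
    norm_num [-inner_self_eq_norm_sq_to_K]
    simp only [omega_inv, omega_sq_inv, omega_pow4_inv, omega_zpow_two_inv, omega_zpow_four_inv]
    simp only [h0, h1, h2, h01, h02, h10, h20, h12', h21]
    simp only [map_mul, map_inv₀, map_neg, map_div₀, map_one, map_ofNat, map_pow,
      Complex.conj_ofReal, Complex.conj_I, conj_omega]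
    simp only [omega_sq_inv,
      show ((ω ^ 2) ^ 2)⁻¹ = ω ^ 2 from inv_eq_of_mul_eq_one_left (by linear_combination (ω ^ 3 + 1) * omega_pow_three),
      show ((ω ^ 2) ^ 4)⁻¹ = ω from inv_eq_of_mul_eq_one_left (by linear_combination (ω ^ 6 + ω ^ 3 + 1) * omega_pow_three)]
    have hs2 : ((Real.sqrt 2 : ℝ) : ℂ) ^ 2 = 2 := by
      rw [← Complex.ofReal_pow, Real.sq_sqrt (by norm_num : (2:ℝ) ≥ 0)]; norm_num
    have hs3 : ((Real.sqrt 3 : ℝ) : ℂ) ^ 2 = 3 := by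
      rw [← Complex.ofReal_pow, Real.sq_sqrt (by norm_num : (3:ℝ) ≥ 0)]; norm_num
    have hs3ne : ((Real.sqrt 3 : ℝ) : ℂ) ≠ 0 := by
      intro h; rw [h] at hs3; norm_num at hs3
    have hI := Complex.I_sq
    have hω := omega_sq_add
    have p4 : ω ^ 4 = ω := by linear_combination ω * omega_pow_three
    have p5 : ω ^ 5 = ω ^ 2 := by linear_combination ω ^ 2 * omega_pow_three
    have p6 : ω ^ 6 = 1 := by linear_combination (ω ^ 3 + 1) * omega_pow_three
    have p7 : ω ^ 7 = ω := by linear_combination (ω ^ 4 + ω) * omega_pow_three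
    have hi4 : ((Real.sqrt 3 : ℝ) : ℂ)⁻¹ ^ 4 = 1 / 9 := by
      rw [inv_pow, show ((Real.sqrt 3 : ℝ) : ℂ) ^ 4 = (((Real.sqrt 3:ℝ):ℂ) ^ 2) ^ 2 by ring, hs3]
      norm_num
    field_simp
    ring_nf
    simp only [hs2, hs3, omega_pow_three, p4, p5, p6, p7, hi4]
    ring
  exact ⟨key, by rw [key]; norm_num⟩
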